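/- arXiv:1402.3638 — 7 statements merged into one kernel-verified Lean document; each statement's English description precedes it below -/
import Mathlib

section
/- Let H be a simple hypergraph and let K = H|_U be the partial hypergraph of H on a vertex subset U (the hypergraph whose edges are the edges of H contained in U). Then every minimal vertex cover of K can be extended to a minimal vertex cover of H, i.e., for every minimal vertex cover C of K there exists a minimal vertex cover C' of H with C ⊆ C'. -/
open Finset

structure SimpleHypergraph (α : Type*) [DecidableEq α] where
  edges : Finset (Finset α)
  nonempty_edges : ∀ E ∈ edges, E.Nonempty
  antichain : ∀ E ∈ edges, ∀ F ∈ edges, E ⊆ F → E = F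

namespace SimpleHypergraph

variable {α : Type*} [DecidableEq α]

/-- The vertex set of a simple hypergraph: the union of its edges. -/
def verts (H : SimpleHypergraph α) : Finset α := H.edges.sup id

/-- `C` is a vertex cover: every edge meets `C`. -/
def IsCover (H : SimpleHypergraph α) (C : Finset α) : Prop :=
  ∀ E ∈ H.edges, ∃ v ∈ E, v ∈ C

/-- `C` is a minimal vertex cover. -/
def IsMinCover (H : SimpleHypergraph α) (C : Finset α) : Prop :=
  H.IsCover C ∧ ∀ D ⊂ C, ¬ H.IsCover D

/-- `A` is independent: it contains no edge. -/
def Indep (H : SimpleHypergraph α) (A : Finset α) : Prop :=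
  ∀ E ∈ H.edges, ¬ E ⊆ A

/-- The partial hypergraph of `H` on a vertex subset `U`. -/
def restrict (H : SimpleHypergraph α) (U : Finset α) : SimpleHypergraph α where
  edges := H.edges.filter (· ⊆ U)
  nonempty_edges := fun E hE => H.nonempty_edges E (Finset.mem_filter.mp hE).1
  antichain := fun E hE F hF h =>
    H.antichain E (Finset.mem_filter.mp hE).1 F (Finset.mem_filter.mp hF).1 h

/-- The maximum cardinality of a minimal vertex cover (big height). -/
noncomputable def alpha0' (H : SimpleHypergraph α) : ℕ :=
  sSup {n : ℕ | ∃ C : Finset α, H.IsMinCover C ∧ n = C.card}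

/-- A bouquet of `H`: a partial hypergraph whose edges have a common vertex,
with a designated flower in each edge belonging to no other edge. -/
structure BouquetOf (H : SimpleHypergraph α) where
  edges : Finset (Finset α)
  edges_nonempty : edges.Nonempty
  subset : edges ⊆ H.edges
  core : ∃ v, ∀ E ∈ edges, v ∈ E
  flower : Finset α → α
  flower_spec : ∀ E ∈ edges, ∀ F ∈ edges, (flower E ∈ F ↔ E = F)

def BouquetOf.flowers {H : SimpleHypergraph α} (B : H.BouquetOf) : Finset α :=
  B.edges.image B.flower

def BouquetOf.verts {H : SimpleHypergraph α} (B : H.BouquetOf) : Finset α :=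
  B.edges.sup id

/-- The union of the edge sets of a finite family of bouquets. -/
def famEdges {H : SimpleHypergraph α} {j : ℕ} (B : Fin j → H.BouquetOf) :
    Finset (Finset α) := Finset.univ.sup fun i => (B i).edges

/-- The union of the flower sets of a finite family of bouquets. -/
def famFlowers {H : SimpleHypergraph α} {j : ℕ} (B : Fin j → H.BouquetOf) :
    Finset α := Finset.univ.sup fun i => (B i).flowers

/-- The union of the vertex sets of a finite family of bouquets. -/
def famVerts {H : SimpleHypergraph α} {j : ℕ} (B : Fin j → H.BouquetOf) :
    Finset α := Finset.univ.sup fun i => (B i).verts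

/-- A semi-strongly disjoint family of bouquets of `H`. -/
def SSD (H : SimpleHypergraph α) {j : ℕ} (B : Fin j → H.BouquetOf) : Prop :=
  (∀ p q : Fin j, p ≠ q → ∀ E ∈ (B p).edges, ∀ f ∈ (B q).flowers, f ∉ E) ∧
  H.Indep (famVerts B \ famFlowers B)

/-- `d'_H`: the maximum of `|E(𝓑)|` over semi-strongly disjoint sets of bouquets. -/
noncomputable def dPrime (H : SimpleHypergraph α) : ℕ :=
  sSup {n : ℕ | ∃ (j : ℕ) (B : Fin j → H.BouquetOf), H.SSD B ∧ n = (famEdges B).card}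

end SimpleHypergraph

open SimpleHypergraph in
/-- every minimal vertex cover of `H|_U` extends to a minimal
vertex cover of `H`. -/
theorem stmt1 {α : Type*} [DecidableEq α] (H : SimpleHypergraph α)
    (U : Finset α) (C : Finset α) (hC : (H.restrict U).IsMinCover C) :
    ∃ C' : Finset α, H.IsMinCover C' ∧ C ⊆ C' := by
  classical
  set D0 : Finset α := C ∪ (H.verts \ U) with hD0
  have hcov0 : H.IsCover D0 := by
    intro E hE
    by_cases hEU : E ⊆ U
    · obtain ⟨v, hvE, hvC⟩ := hC.1 E (Finset.mem_filter.mpr ⟨hE, hEU⟩)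
      exact ⟨v, hvE, Finset.mem_union_left _ hvC⟩
    · obtain ⟨v, hvE, hvU⟩ := Finset.not_subset.mp hEU
      refine ⟨v, hvE, Finset.mem_union_right _ (Finset.mem_sdiff.mpr ⟨?_, hvU⟩)⟩
      exact Finset.mem_sup.mpr ⟨E, hE, hvE⟩
  have hclaim : ∀ D ⊆ D0, H.IsCover D → C ⊆ D := by
    intro D hD hcov c hc
    have hnc : ¬ (H.restrict U).IsCover (C.erase c) :=
      hC.2 _ (Finset.erase_ssubset hc)
    rw [SimpleHypergraph.IsCover] at hnc
    push_neg at hnc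
    obtain ⟨E, hE, hEerase⟩ := hnc
    have hE' := Finset.mem_filter.mp hE
    obtain ⟨v, hvE, hvD⟩ := hcov E hE'.1
    have hv0 := hD hvD
    rcases Finset.mem_union.mp hv0 with hvC | hvs
    · have hvc : v = c := by
        by_contra hne
        exact hEerase v hvE (Finset.mem_erase.mpr ⟨hne, hvC⟩)
      rwa [← hvc]
    · exact absurd (hE'.2 hvE) (Finset.mem_sdiff.mp hvs).2
  obtain ⟨D, hDmem, hDmin⟩ := Finset.exists_min_image
    ((D0.powerset).filter (fun D => H.IsCover D)) Finset.card
    ⟨D0, Finset.mem_filter.mpr ⟨Finset.mem_powerset_self _, hcov0⟩⟩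
  have hDmem' := Finset.mem_filter.mp hDmem
  have hDsub : D ⊆ D0 := Finset.mem_powerset.mp hDmem'.1
  refine ⟨D, ⟨hDmem'.2, ?_⟩, hclaim D hDsub hDmem'.2⟩
  intro D' hD' hcovD'
  have hlt : D'.card < D.card := Finset.card_lt_card hD'
  have hle := hDmin D' (Finset.mem_filter.mpr
    ⟨Finset.mem_powerset.mpr (hD'.subset.trans hDsub), hcovD'⟩)
  omega
end

section
/- Let B = {B₁, ..., B_j} be a semi-strongly disjoint set of bouquets of a simple hypergraph H. Then the flower set F(B) is a minimal vertex cover of the partial hypergraph H|_{V(B)} of H on the vertex set V(B) of B. -/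
open Finset

open SimpleHypergraph in
/-- the flower set of a semi-strongly disjoint set of bouquets `𝓑`
is a minimal vertex cover of `H|_{V(𝓑)}`. -/
theorem stmt4 {α : Type*} [DecidableEq α] (H : SimpleHypergraph α)
    {j : ℕ} (B : Fin j → H.BouquetOf) (hB : H.SSD B) :
    (H.restrict (famVerts B)).IsMinCover (famFlowers B) := by
  obtain ⟨h1, h2⟩ := hB
  constructor
  · intro E hE
    simp only [SimpleHypergraph.restrict, Finset.mem_filter] at hE
    obtain ⟨hEH, hEV⟩ := hE
    by_contra h
    push_neg at h
    exact h2 E hEH (fun v hv => Finset.mem_sdiff.mpr ⟨hEV hv, fun hf => h v hv hf⟩)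
  · intro D hD hcov
    obtain ⟨f, hfC, hfD⟩ := Finset.exists_of_ssubset hD
    rw [famFlowers, Finset.mem_sup] at hfC
    obtain ⟨p, -, hfp⟩ := hfC
    rw [BouquetOf.flowers, Finset.mem_image] at hfp
    obtain ⟨E, hEp, rfl⟩ := hfp
    have hEH : E ∈ H.edges := (B p).subset hEp
    have hEV : E ⊆ famVerts B := by
      intro v hv
      rw [famVerts, Finset.mem_sup]
      exact ⟨p, Finset.mem_univ p, by
        rw [BouquetOf.verts, Finset.mem_sup]; exact ⟨E, hEp, hv⟩⟩
    have hEr : E ∈ (H.restrict (famVerts B)).edges := by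
      simp only [SimpleHypergraph.restrict, Finset.mem_filter]; exact ⟨hEH, hEV⟩
    obtain ⟨v, hvE, hvD⟩ := hcov E hEr
    have hvC : v ∈ famFlowers B := hD.subset hvD
    rw [famFlowers, Finset.mem_sup] at hvC
    obtain ⟨q, -, hvq⟩ := hvC
    rw [BouquetOf.flowers, Finset.mem_image] at hvq
    obtain ⟨F, hFq, rfl⟩ := hvq
    rcases eq_or_ne p q with rfl | hpq
    · have := ((B p).flower_spec F hFq E hEp).mp hvE
      subst this
      exact hfD hvD
    · exact h1 p q (Ne.symm (Ne.symm hpq)) E hEp _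
        (by rw [BouquetOf.flowers]; exact Finset.mem_image_of_mem _ hFq) hvE
end

section
/- Let B be a semi-strongly disjoint set of bouquets of a simple hypergraph H. Then the flower set F(B) can be extended to a minimal vertex cover of H: there exists a minimal vertex cover C of H with F(B) ⊆ C. -/
open Finset

open SimpleHypergraph in
/-- the flower set of a semi-strongly disjoint set of bouquets
extends to a minimal vertex cover of `H`. -/
theorem stmt5 {α : Type*} [DecidableEq α] (H : SimpleHypergraph α)
    {j : ℕ} (B : Fin j → H.BouquetOf) (hB : H.SSD B) :
    ∃ C : Finset α, H.IsMinCover C ∧ famFlowers B ⊆ C := by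
  classical
  set F := famFlowers B with hF
  set C₀ : Finset α := H.verts \ (famVerts B \ F) with hC₀
  -- every edge of a bouquet lies in famVerts
  have hEfam : ∀ (i : Fin j), ∀ E ∈ (B i).edges, E ⊆ famVerts B := by
    intro i E hE
    intro v hv
    have h1 : v ∈ (B i).verts := by
      simp only [BouquetOf.verts, Finset.mem_sup]
      exact ⟨E, hE, hv⟩
    simp only [famVerts, Finset.mem_sup]
    exact ⟨i, Finset.mem_univ i, h1⟩
  -- C₀ is a cover
  have hcov : H.IsCover C₀ := by
    intro E hE
    have hns : ¬ E ⊆ famVerts B \ F := hB.2 E hE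
    obtain ⟨v, hvE, hv⟩ := Finset.not_subset.mp hns
    refine ⟨v, hvE, ?_⟩
    have hvV : v ∈ H.verts := by
      simp only [verts, Finset.mem_sup]
      exact ⟨E, hE, hvE⟩
    simp [hC₀, hvV, hv]
  -- key: each flower has a private edge
  have hkey : ∀ f ∈ F, ∃ E ∈ H.edges, f ∈ E ∧ ∀ v ∈ E, v ∈ C₀ → v = f := by
    intro f hf
    simp only [hF, famFlowers, Finset.mem_sup] at hf
    obtain ⟨i, -, hfi⟩ := hf
    simp only [BouquetOf.flowers, Finset.mem_image] at hfi
    obtain ⟨E, hE, rfl⟩ := hfi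
    refine ⟨E, (B i).subset hE, ((B i).flower_spec E hE E hE).mpr rfl, ?_⟩
    intro v hvE hvC
    have hvfam : v ∈ famVerts B := hEfam i E hE hvE
    have hvF : v ∈ F := by
      by_contra hvF
      have : v ∈ famVerts B \ F := Finset.mem_sdiff.mpr ⟨hvfam, hvF⟩
      rw [hC₀] at hvC
      exact (Finset.mem_sdiff.mp hvC).2 this
    simp only [hF, famFlowers, Finset.mem_sup] at hvF
    obtain ⟨q, -, hvq⟩ := hvF
    by_cases hqi : q = i
    · subst hqi
      simp only [BouquetOf.flowers, Finset.mem_image] at hvq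
      obtain ⟨E', hE', rfl⟩ := hvq
      have := ((B q).flower_spec E' hE' E hE).mp hvE
      rw [this]
    · exact absurd hvE (hB.1 i q (fun h => hqi h.symm) E hE v hvq)
  -- choose a minimum-cardinality cover inside C₀
  set T : Finset (Finset α) := C₀.powerset.filter (fun D => H.IsCover D) with hT
  have hC₀T : C₀ ∈ T := by
    simp [hT, hcov]
  obtain ⟨C, hCT, hCmin⟩ := T.exists_min_image Finset.card ⟨C₀, hC₀T⟩
  have hCsub : C ⊆ C₀ := Finset.mem_powerset.mp (Finset.mem_filter.mp hCT).1
  have hCcov : H.IsCover C := (Finset.mem_filter.mp hCT).2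
  refine ⟨C, ⟨hCcov, ?_⟩, ?_⟩
  · intro D hD hDcov
    have hDT : D ∈ T := by
      simp only [hT, Finset.mem_filter, Finset.mem_powerset]
      exact ⟨hD.subset.trans hCsub, hDcov⟩
    have := hCmin D hDT
    exact absurd (Finset.card_lt_card hD) (not_lt.mpr this)
  · intro f hf
    obtain ⟨E, hE, hfE, hpriv⟩ := hkey f hf
    obtain ⟨v, hvE, hvC⟩ := hCcov E hE
    have := hpriv v hvE (hCsub hvC)
    rwa [this] at hvC
end

section
/- For every minimal vertex cover C of a simple hypergraph H, there exists a semi-strongly disjoint set of bouquets B of H whose flower set F(B) equals C. -/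
open Finset

open SimpleHypergraph in
/-- every minimal vertex cover is the flower set of some
semi-strongly disjoint set of bouquets. -/
theorem stmt6 {α : Type*} [DecidableEq α] (H : SimpleHypergraph α)
    (C : Finset α) (hC : H.IsMinCover C) :
    ∃ (j : ℕ) (B : Fin j → H.BouquetOf), H.SSD B ∧ famFlowers B = C := by

  classical
  have key : ∀ v ∈ C, ∃ E ∈ H.edges, v ∈ E ∧ ∀ w ∈ E, w ∈ C → w = v := by
    intro v hv
    have hss : C \ {v} ⊂ C :=
      Finset.sdiff_ssubset (Finset.singleton_subset_iff.mpr hv) (Finset.singleton_nonempty v)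
    have hnc := hC.2 _ hss
    unfold SimpleHypergraph.IsCover at hnc
    push_neg at hnc
    obtain ⟨E, hE, hEw⟩ := hnc
    obtain ⟨u, hu, huC⟩ := hC.1 E hE
    have huv : u = v := by
      have := hEw u hu
      simp [Finset.mem_sdiff, huC] at this
      exact this
    refine ⟨E, hE, huv ▸ hu, fun w hw hwC => ?_⟩
    have := hEw w hw
    simp [Finset.mem_sdiff, hwC] at this
    exact this
  set j := C.card with hj
  have vfun : Fin j → α := fun i => (C.equivFin.symm i : α)
  set v : Fin j → α := fun i => (C.equivFin.symm i : α) with hv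
  have hvC : ∀ i, v i ∈ C := fun i => (C.equivFin.symm i).2
  have hvinj : Function.Injective v := fun a b hab => by
    have : C.equivFin.symm a = C.equivFin.symm b := Subtype.ext hab
    exact C.equivFin.symm.injective this
  set E : Fin j → Finset α := fun i => (key _ (hvC i)).choose with hEdef
  have hEmem : ∀ i, E i ∈ H.edges := fun i => (key _ (hvC i)).choose_spec.1
  have hvE : ∀ i, v i ∈ E i := fun i => (key _ (hvC i)).choose_spec.2.1
  have hEC : ∀ i, ∀ w ∈ E i, w ∈ C → w = v i := fun i => (key _ (hvC i)).choose_spec.2.2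
  set B : Fin j → H.BouquetOf := fun i =>
    { edges := {E i}
      edges_nonempty := Finset.singleton_nonempty _
      subset := Finset.singleton_subset_iff.mpr (hEmem i)
      core := ⟨v i, fun F hF => by
        rw [Finset.mem_singleton] at hF; exact hF ▸ hvE i⟩
      flower := fun _ => v i
      flower_spec := by
        intro F hF G hG
        rw [Finset.mem_singleton] at hF hG
        subst hF; subst hG
        simp [hvE i] } with hB
  have hflowers : ∀ i, (B i).flowers = {v i} := by
    intro i
    simp [SimpleHypergraph.BouquetOf.flowers, hB]
  have hfam : famFlowers B = C := by
    ext x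
    simp only [SimpleHypergraph.famFlowers, Finset.mem_sup, Finset.mem_univ, true_and]
    constructor
    · rintro ⟨i, hi⟩
      rw [hflowers i, Finset.mem_singleton] at hi
      exact hi ▸ hvC i
    · intro hx
      refine ⟨C.equivFin ⟨x, hx⟩, ?_⟩
      rw [hflowers, Finset.mem_singleton, hv]
      simp
  refine ⟨j, B, ⟨?_, ?_⟩, hfam⟩
  · intro p q hpq F hF f hf
    rw [show (B p).edges = {E p} from rfl, Finset.mem_singleton] at hF
    rw [hflowers q, Finset.mem_singleton] at hf
    subst hF; subst hf
    intro hmem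
    exact hpq ((hvinj (hEC p _ hmem (hvC q)).symm).symm).symm
  · intro F hF hsub
    obtain ⟨u, hu, huC⟩ := hC.1 F hF
    have := hsub hu
    rw [Finset.mem_sdiff] at this
    exact this.2 (hfam ▸ huC)
end

section
/- For any simple hypergraph H, α₀'(H) = d'_H, i.e., the maximum cardinality of a minimal vertex cover of H equals the maximum of |E(B)| over all semi-strongly disjoint sets of bouquets B of H. -/
open Finset

namespace SimpleHypergraph

variable {α : Type*} [DecidableEq α]

lemma exists_minCover_subset (H : SimpleHypergraph α) :
    ∀ D : Finset α, H.IsCover D → ∃ C, C ⊆ D ∧ H.IsMinCover C := by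
  intro D
  induction D using Finset.strongInductionOn with
  | _ D ih =>
    intro hD
    by_cases h : ∀ D' ⊂ D, ¬ H.IsCover D'
    · exact ⟨D, Finset.Subset.refl D, hD, h⟩
    · push_neg at h
      obtain ⟨D', hsub, hcov⟩ := h
      obtain ⟨C, hCsub, hC⟩ := ih D' hsub hcov
      exact ⟨C, hCsub.trans hsub.subset, hC⟩

lemma verts_isCover (H : SimpleHypergraph α) : H.IsCover H.verts := by
  intro E hE
  obtain ⟨v, hv⟩ := H.nonempty_edges E hE
  exact ⟨v, hv, Finset.mem_sup.mpr ⟨E, hE, hv⟩⟩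

lemma minCover_subset_verts {H : SimpleHypergraph α} {C : Finset α}
    (hC : H.IsMinCover C) : C ⊆ H.verts := by
  intro v hv
  by_contra hnv
  refine hC.2 (C.erase v) (Finset.erase_ssubset hv) ?_
  intro E hE
  obtain ⟨w, hwE, hwC⟩ := hC.1 E hE
  have hwV : w ∈ H.verts := Finset.mem_sup.mpr ⟨E, hE, hwE⟩
  have : w ≠ v := fun h => hnv (h ▸ hwV)
  exact ⟨w, hwE, Finset.mem_erase.mpr ⟨this, hwC⟩⟩

lemma dir1 (H : SimpleHypergraph α) {C : Finset α} (hC : H.IsMinCover C) :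
    ∃ (j : ℕ) (B : Fin j → H.BouquetOf), H.SSD B ∧ C.card = (famEdges B).card := by
  classical
  have key : ∀ v : {x // x ∈ C}, ∃ E, E ∈ H.edges ∧ (v : α) ∈ E ∧
      ∀ w ∈ E, w ∈ C → w = (v : α) := by
    rintro ⟨v, hv⟩
    have h1 : ¬ H.IsCover (C.erase v) := hC.2 _ (Finset.erase_ssubset hv)
    unfold IsCover at h1
    push_neg at h1
    obtain ⟨E, hE, hE2⟩ := h1
    obtain ⟨w, hwE, hwC⟩ := hC.1 E hE
    have hwv : w = v := by
      by_contra hne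
      exact hE2 w hwE (Finset.mem_erase.mpr ⟨hne, hwC⟩)
    refine ⟨E, hE, hwv ▸ hwE, ?_⟩
    intro u huE huC
    by_contra hne
    exact hE2 u huE (Finset.mem_erase.mpr ⟨hne, huC⟩)
  choose Ed hEd hvEd hEdC using key
  set j := C.card with hj
  let eqv : {x // x ∈ C} ≃ Fin j := C.equivFin
  let B : Fin j → H.BouquetOf := fun i =>
    { edges := {Ed (eqv.symm i)}
      edges_nonempty := Finset.singleton_nonempty _
      subset := Finset.singleton_subset_iff.mpr (hEd _)
      core := ⟨(eqv.symm i : α), by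
        intro E hE
        rw [Finset.mem_singleton] at hE
        exact hE ▸ hvEd _⟩
      flower := fun _ => (eqv.symm i : α)
      flower_spec := by
        intro E hE F hF
        rw [Finset.mem_singleton] at hE hF
        subst hE; subst hF
        simp [hvEd _] }
  have hBedges : ∀ i, (B i).edges = {Ed (eqv.symm i)} := fun i => rfl
  have hBflowers : ∀ i, (B i).flowers = {(eqv.symm i : α)} := by
    intro i
    simp [BouquetOf.flowers, hBedges, B]
  have hEinj : Function.Injective fun i => Ed (eqv.symm i) := by
    intro p q hpq
    have hpq' : Ed (eqv.symm p) = Ed (eqv.symm q) := hpq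
    have h1 : ((eqv.symm p : α)) ∈ Ed (eqv.symm q) := by
      rw [← hpq']; exact hvEd _
    have h2 : (eqv.symm p : α) = (eqv.symm q : α) :=
      hEdC (eqv.symm q) _ h1 (eqv.symm p).2
    have : eqv.symm p = eqv.symm q := Subtype.ext h2
    exact eqv.symm.injective this
  refine ⟨j, B, ⟨?_, ?_⟩, ?_⟩
  · intro p q hpq E hE f hf
    rw [hBedges, Finset.mem_singleton] at hE
    rw [hBflowers, Finset.mem_singleton] at hf
    subst hE; subst hf
    intro hmem
    have h2 : (eqv.symm q : α) = (eqv.symm p : α) :=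
      hEdC (eqv.symm p) _ hmem (eqv.symm q).2
    exact hpq (eqv.symm.injective (Subtype.ext h2)).symm
  · intro E hE hsub
    obtain ⟨w, hwE, hwC⟩ := hC.1 E hE
    have hwF : w ∈ famFlowers B := by
      refine Finset.mem_sup.mpr ⟨eqv ⟨w, hwC⟩, Finset.mem_univ _, ?_⟩
      rw [hBflowers, Finset.mem_singleton, Equiv.symm_apply_apply]
    have := hsub hwE
    rw [Finset.mem_sdiff] at this
    exact this.2 hwF
  · have himg : famEdges B = Finset.univ.image fun i => Ed (eqv.symm i) := by
      ext E
      simp [famEdges, Finset.mem_sup, hBedges, eq_comm]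
    rw [himg, Finset.card_image_of_injective _ hEinj, Finset.card_univ,
      Fintype.card_fin]

lemma dir2 (H : SimpleHypergraph α) {j : ℕ} {B : Fin j → H.BouquetOf}
    (hB : H.SSD B) : ∃ C, H.IsMinCover C ∧ (famEdges B).card ≤ C.card := by
  classical
  set S := famVerts B \ famFlowers B with hS
  have hcov : H.IsCover (H.verts \ S) := by
    intro E hE
    by_contra h
    push_neg at h
    refine hB.2 E hE ?_
    intro v hv
    have hvv : v ∈ H.verts := Finset.mem_sup.mpr ⟨E, hE, hv⟩
    have h2 := h v hv
    rw [Finset.mem_sdiff] at h2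
    push_neg at h2
    exact h2 hvv
  obtain ⟨C, hCsub, hC⟩ := exists_minCover_subset H _ hcov
  have hEC : ∀ p : Fin j, ∀ E ∈ (B p).edges, ∀ w ∈ E, w ∈ C → w = (B p).flower E := by
    intro p E hEp w hwE hwC
    have hwD := hCsub hwC
    have hwnS : w ∉ S := (Finset.mem_sdiff.mp hwD).2
    have hwV : w ∈ famVerts B := by
      refine Finset.mem_sup.mpr ⟨p, Finset.mem_univ _, ?_⟩
      exact Finset.mem_sup.mpr ⟨E, hEp, hwE⟩
    have hwF : w ∈ famFlowers B := by
      by_contra hwF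
      exact hwnS (Finset.mem_sdiff.mpr ⟨hwV, hwF⟩)
    obtain ⟨q, -, hq⟩ := Finset.mem_sup.mp hwF
    obtain ⟨F, hF, hFw⟩ := Finset.mem_image.mp hq
    by_cases hpq : p = q
    · subst hpq
      have hFE : F = E := ((B p).flower_spec F hF E hEp).mp (hFw ▸ hwE)
      rw [← hFw, hFE]
    · exact absurd hwE (hB.1 p q hpq E hEp w hq)
  have hfl : ∀ p : Fin j, ∀ E ∈ (B p).edges, (B p).flower E ∈ C := by
    intro p E hEp
    obtain ⟨w, hwE, hwC⟩ := hC.1 E ((B p).subset hEp)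
    exact (hEC p E hEp w hwE hwC) ▸ hwC
  refine ⟨C, hC, ?_⟩
  by_cases hne : (famEdges B).Nonempty
  · obtain ⟨E0, hE0⟩ := hne
    obtain ⟨p0, -, hE0p⟩ := Finset.mem_sup.mp hE0
    obtain ⟨v0, -⟩ := H.nonempty_edges E0 ((B p0).subset hE0p)
    set f : Finset α → α := fun E =>
      if h : ∃ p, E ∈ (B p).edges then (B h.choose).flower E else v0 with hf
    refine Finset.card_le_card_of_injOn f ?_ ?_
    · intro E hE
      obtain ⟨p, -, hEp⟩ := Finset.mem_sup.mp hE
      have hex : ∃ p, E ∈ (B p).edges := ⟨p, hEp⟩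
      rw [hf]
      simp only [dif_pos hex]
      exact hfl _ E hex.choose_spec
    · intro E hE E' hE' hEq
      obtain ⟨p, -, hEp⟩ := Finset.mem_sup.mp hE
      obtain ⟨q, -, hEq'⟩ := Finset.mem_sup.mp hE'
      have hex : ∃ p, E ∈ (B p).edges := ⟨p, hEp⟩
      have hex' : ∃ p, E' ∈ (B p).edges := ⟨q, hEq'⟩
      rw [hf] at hEq
      simp only [dif_pos hex, dif_pos hex'] at hEq
      set p1 := hex.choose with hp1
      set q1 := hex'.choose with hq1
      have hp1s : E ∈ (B p1).edges := hex.choose_spec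
      have hq1s : E' ∈ (B q1).edges := hex'.choose_spec
      clear_value p1 q1
      have h1 : (B p1).flower E ∈ E := ((B p1).flower_spec E hp1s E hp1s).mpr rfl
      have h2 : (B q1).flower E' ∈ E' := ((B q1).flower_spec E' hq1s E' hq1s).mpr rfl
      by_cases hpq : p1 = q1
      · subst hpq
        have : (B p1).flower E ∈ E' := hEq ▸ h2
        exact (((B p1).flower_spec E hp1s E' hq1s).mp this)
      · exfalso
        have hfp : (B p1).flower E ∈ (B p1).flowers :=
          Finset.mem_image.mpr ⟨E, hp1s, rfl⟩
        have : (B p1).flower E ∈ E' := hEq ▸ h2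
        exact hB.1 q1 p1 (fun h => hpq h.symm) E' hq1s _ hfp this
  · rw [Finset.not_nonempty_iff_eq_empty] at hne
    simp [hne]

end SimpleHypergraph

open SimpleHypergraph in
/-- `α₀'(H) = d'_H`. -/
theorem stmt7 {α : Type*} [DecidableEq α] (H : SimpleHypergraph α) :
    H.alpha0' = H.dPrime := by
  classical
  have hS1ne : ∃ C, H.IsMinCover C :=
    (exists_minCover_subset H H.verts (verts_isCover H)).imp fun C h => h.2
  obtain ⟨C0, hC0⟩ := hS1ne
  have hbdd1 : BddAbove {n : ℕ | ∃ C : Finset α, H.IsMinCover C ∧ n = C.card} := by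
    refine ⟨H.verts.card, ?_⟩
    rintro n ⟨C, hC, rfl⟩
    exact Finset.card_le_card (minCover_subset_verts hC)
  have hbdd2 : BddAbove {n : ℕ | ∃ (j : ℕ) (B : Fin j → H.BouquetOf),
      H.SSD B ∧ n = (famEdges B).card} := by
    refine ⟨H.edges.card, ?_⟩
    rintro n ⟨j, B, hB, rfl⟩
    refine Finset.card_le_card ?_
    exact Finset.sup_le fun i _ => (B i).subset
  have h0 : (0 : ℕ) ∈ {n : ℕ | ∃ (j : ℕ) (B : Fin j → H.BouquetOf),
      H.SSD B ∧ n = (famEdges B).card} := by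
    refine ⟨0, Fin.elim0, ⟨fun p => p.elim0, ?_⟩, ?_⟩
    · intro E hE hsub
      obtain ⟨v, hv⟩ := H.nonempty_edges E hE
      have := hsub hv
      simp [famVerts, famFlowers] at this
    · simp [famEdges]
  rw [alpha0', dPrime]
  apply le_antisymm
  · refine csSup_le ⟨C0.card, C0, hC0, rfl⟩ ?_
    rintro n ⟨C, hC, rfl⟩
    obtain ⟨j, B, hB, hcard⟩ := dir1 H hC
    exact le_csSup hbdd2 ⟨j, B, hB, hcard⟩
  · refine csSup_le ⟨0, h0⟩ ?_
    rintro n ⟨j, B, hB, rfl⟩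
    obtain ⟨C, hC, hle⟩ := dir2 H hB
    exact hle.trans (le_csSup hbdd1 ⟨C, hC, rfl⟩)
end

section
/- If B is a semi-strongly disjoint set of bouquets of a simple hypergraph H with |F(B)| = d'_H (maximum possible), then F(B) is a minimal vertex cover of H of maximum cardinality. -/
open Finset

namespace SimpleHypergraph

variable {α : Type*} [DecidableEq α] {H : SimpleHypergraph α}

theorem SH9_flower_mem (B : H.BouquetOf) {E : Finset α} (hE : E ∈ B.edges) :
    B.flower E ∈ E := (B.flower_spec E hE E hE).mpr rfl

theorem SH9_mem_famEdges {j : ℕ} {B : Fin j → H.BouquetOf} {E : Finset α} :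
    E ∈ famEdges B ↔ ∃ i, E ∈ (B i).edges := by
  simp [famEdges, Finset.mem_sup]

theorem SH9_mem_famFlowers {j : ℕ} {B : Fin j → H.BouquetOf} {a : α} :
    a ∈ famFlowers B ↔ ∃ i, a ∈ (B i).flowers := by
  simp [famFlowers, Finset.mem_sup]

theorem SH9_edge_subset_famVerts {j : ℕ} {B : Fin j → H.BouquetOf} {i : Fin j}
    {E : Finset α} (hE : E ∈ (B i).edges) : E ⊆ famVerts B := by
  intro x hx
  exact Finset.mem_sup.mpr ⟨i, Finset.mem_univ i, Finset.mem_sup.mpr ⟨E, hE, hx⟩⟩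

theorem SH9_notMem_edges {j : ℕ} {B : Fin j → H.BouquetOf} (hB : H.SSD B)
    {p q : Fin j} (hpq : p ≠ q) {E : Finset α} (hEp : E ∈ (B p).edges) :
    E ∉ (B q).edges := fun hEq =>
  hB.1 p q hpq E hEp ((B q).flower E) (Finset.mem_image_of_mem _ hEq)
    (SH9_flower_mem _ hEq)

theorem SH9_edge_inter {j : ℕ} {B : Fin j → H.BouquetOf} (hB : H.SSD B)
    {p : Fin j} {E : Finset α} (hEp : E ∈ (B p).edges)
    {x : α} (hxE : x ∈ E) (hxF : x ∈ famFlowers B) : x = (B p).flower E := by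
  obtain ⟨i, hi⟩ := SH9_mem_famFlowers.mp hxF
  obtain ⟨E', hE', rfl⟩ := Finset.mem_image.mp hi
  by_cases hip : i = p
  · subst hip
    have h := ((B i).flower_spec E' hE' E hEp).mp hxE
    rw [h]
  · exact absurd hxE
      (hB.1 p i (fun h => hip h.symm) E hEp _ (Finset.mem_image_of_mem _ hE'))

theorem SH9_card_flowers_le {j : ℕ} {B : Fin j → H.BouquetOf} (hB : H.SSD B) :
    (famFlowers B).card ≤ (famEdges B).card := by
  have h1 : (famFlowers B).card ≤ ∑ i, (B i).flowers.card := by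
    rw [famFlowers, Finset.sup_eq_biUnion]
    exact Finset.card_biUnion_le
  have h3 : (famEdges B).card = ∑ i, (B i).edges.card := by
    rw [famEdges, Finset.sup_eq_biUnion]
    exact Finset.card_biUnion fun p _ q _ hpq =>
      Finset.disjoint_left.mpr fun E hE => SH9_notMem_edges hB hpq hE
  have h2 : ∑ i, (B i).flowers.card ≤ ∑ i, (B i).edges.card :=
    Finset.sum_le_sum fun i _ => Finset.card_image_le
  omega

theorem SH9_dPrime_bdd (H : SimpleHypergraph α) :
    BddAbove {n : ℕ | ∃ (j : ℕ) (B : Fin j → H.BouquetOf),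
      H.SSD B ∧ n = (famEdges B).card} := by
  refine ⟨H.edges.card, fun n hn => ?_⟩
  obtain ⟨j, B, _, rfl⟩ := hn
  refine Finset.card_le_card fun E hE => ?_
  obtain ⟨i, hi⟩ := SH9_mem_famEdges.mp hE
  exact (B i).subset hi

/-- A single-edge bouquet. -/
def SH9_single (H : SimpleHypergraph α) (E : Finset α) (v : α)
    (hE : E ∈ H.edges) (hv : v ∈ E) : H.BouquetOf where
  edges := {E}
  edges_nonempty := ⟨E, Finset.mem_singleton_self E⟩
  subset := by simpa using hE
  core := ⟨v, by
    intro F hF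
    rw [Finset.mem_singleton] at hF
    subst hF; exact hv⟩
  flower := fun _ => v
  flower_spec := by
    intro E1 h1 E2 h2
    rw [Finset.mem_singleton] at h1 h2
    subst h1; subst h2; simp [hv]

theorem SH9_single_edges (H : SimpleHypergraph α) (E : Finset α) (v : α)
    (hE : E ∈ H.edges) (hv : v ∈ E) : (SH9_single H E v hE hv).edges = {E} := rfl

theorem SH9_single_flowers (H : SimpleHypergraph α) (E : Finset α) (v : α)
    (hE : E ∈ H.edges) (hv : v ∈ E) : (SH9_single H E v hE hv).flowers = {v} := by
  simp [SH9_single, BouquetOf.flowers]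

theorem SH9_single_verts (H : SimpleHypergraph α) (E : Finset α) (v : α)
    (hE : E ∈ H.edges) (hv : v ∈ E) : (SH9_single H E v hE hv).verts = E := by
  simp [SH9_single, BouquetOf.verts]

end SimpleHypergraph
open SimpleHypergraph in
/-- a semi-strongly disjoint set of bouquets with `|F(𝓑)| = d'_H`
has flower set a minimal vertex cover of maximum cardinality. -/
theorem stmt9 {α : Type*} [DecidableEq α] (H : SimpleHypergraph α)
    {j : ℕ} (B : Fin j → H.BouquetOf) (hB : H.SSD B)
    (hmax : (famFlowers B).card = H.dPrime) :
    H.IsMinCover (famFlowers B) ∧ (famFlowers B).card = H.alpha0' := by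
  classical
  have hbdd := SH9_dPrime_bdd H
  -- F(B) is a cover
  have hcover : H.IsCover (famFlowers B) := by
    by_contra hnc
    rw [IsCover] at hnc
    push_neg at hnc
    obtain ⟨E0, hE00, hE0⟩ := hnc
    set S := H.edges.filter (fun E => ∀ v ∈ E, v ∉ famFlowers B) with hSdef
    have hSne : S.Nonempty := ⟨E0, Finset.mem_filter.mpr ⟨hE00, hE0⟩⟩
    have key : ∀ E ∈ S, (E \ famVerts B).Nonempty := by
      intro E hE
      rw [Finset.mem_filter] at hE
      by_contra h
      rw [Finset.not_nonempty_iff_eq_empty, Finset.sdiff_eq_empty_iff_subset] at h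
      exact hB.2 E hE.1 fun x hx => Finset.mem_sdiff.mpr ⟨h hx, hE.2 x hx⟩
    obtain ⟨E, hES, hEmin⟩ := S.exists_min_image (fun E => (E \ famVerts B).card) hSne
    obtain ⟨v, hv⟩ := key E hES
    rw [Finset.mem_sdiff] at hv
    have hEH : E ∈ H.edges := (Finset.mem_filter.mp hES).1
    have hEF : ∀ w ∈ E, w ∉ famFlowers B := (Finset.mem_filter.mp hES).2
    set NB := SH9_single H E v hEH hv.1 with hNB
    set B' : Fin (j+1) → H.BouquetOf := Fin.snoc B NB with hB'def
    have hB'c : ∀ i : Fin j, B' i.castSucc = B i := fun i => Fin.snoc_castSucc ..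
    have hB'l : B' (Fin.last j) = NB := Fin.snoc_last ..
    -- memberships in the extended family
    have hvF' : v ∈ famFlowers B' := by
      refine SH9_mem_famFlowers.mpr ⟨Fin.last j, ?_⟩
      rw [hB'l, hNB, SH9_single_flowers]
      exact Finset.mem_singleton_self v
    have hFsub : famFlowers B ⊆ famFlowers B' := by
      intro a ha
      obtain ⟨i, hi⟩ := SH9_mem_famFlowers.mp ha
      exact SH9_mem_famFlowers.mpr ⟨i.castSucc, by rw [hB'c]; exact hi⟩
    have hVsub : famVerts B' ⊆ famVerts B ∪ E := by
      intro x hx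
      obtain ⟨i, -, hi⟩ := Finset.mem_sup.mp hx
      rcases Fin.eq_castSucc_or_eq_last i with ⟨i', rfl⟩ | rfl
      · rw [hB'c] at hi
        exact Finset.mem_union_left _ (Finset.mem_sup.mpr ⟨i', Finset.mem_univ _, hi⟩)
      · rw [hB'l, hNB, SH9_single_verts] at hi
        exact Finset.mem_union_right _ hi
    have hssd : H.SSD B' := by
      constructor
      · intro p q hpq Ep hEp f hf
        rcases Fin.eq_castSucc_or_eq_last p with ⟨ip, rfl⟩ | rfl <;>
          rcases Fin.eq_castSucc_or_eq_last q with ⟨iq, rfl⟩ | rfl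
        · rw [hB'c] at hEp hf
          exact hB.1 ip iq (fun h => hpq (congrArg _ h)) Ep hEp f hf
        · rw [hB'c] at hEp
          rw [hB'l, hNB, SH9_single_flowers, Finset.mem_singleton] at hf
          subst hf
          exact fun hfe => hv.2 (SH9_edge_subset_famVerts hEp hfe)
        · rw [hB'l, hNB, SH9_single_edges, Finset.mem_singleton] at hEp
          subst hEp
          rw [hB'c] at hf
          exact fun hfe => hEF f hfe (SH9_mem_famFlowers.mpr ⟨iq, hf⟩)
        · exact absurd rfl hpq
      · intro G hG hGsub
        have hGF : ∀ w ∈ G, w ∉ famFlowers B := fun w hw hwF =>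
          (Finset.mem_sdiff.mp (hGsub hw)).2 (hFsub hwF)
        have hGS : G ∈ S := Finset.mem_filter.mpr ⟨hG, hGF⟩
        have hGne := key G hGS
        have hGsub2 : G \ famVerts B ⊆ (E \ famVerts B).erase v := by
          intro w hw
          rw [Finset.mem_sdiff] at hw
          have h2 := Finset.mem_sdiff.mp (hGsub hw.1)
          have hwE : w ∈ E := by
            rcases Finset.mem_union.mp (hVsub h2.1) with h | h
            · exact absurd h hw.2
            · exact h
          refine Finset.mem_erase.mpr ⟨?_, Finset.mem_sdiff.mpr ⟨hwE, hw.2⟩⟩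
          intro hwv
          exact h2.2 (hwv ▸ hvF')
        have hc1 : (G \ famVerts B).card ≤ ((E \ famVerts B).erase v).card :=
          Finset.card_le_card hGsub2
        have hc2 : ((E \ famVerts B).erase v).card = (E \ famVerts B).card - 1 :=
          Finset.card_erase_of_mem (Finset.mem_sdiff.mpr hv)
        have hc3 : (E \ famVerts B).card ≤ (G \ famVerts B).card := hEmin G hGS
        have hc4 : 0 < (E \ famVerts B).card :=
          Finset.card_pos.mpr ⟨v, Finset.mem_sdiff.mpr hv⟩
        omega
    have hfe : famEdges B' = insert E (famEdges B) := by
      ext X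
      rw [SH9_mem_famEdges, Finset.mem_insert, SH9_mem_famEdges]
      constructor
      · rintro ⟨i, hi⟩
        rcases Fin.eq_castSucc_or_eq_last i with ⟨i', rfl⟩ | rfl
        · rw [hB'c] at hi; exact Or.inr ⟨i', hi⟩
        · rw [hB'l, hNB, SH9_single_edges, Finset.mem_singleton] at hi
          exact Or.inl hi
      · rintro (rfl | ⟨i, hi⟩)
        · exact ⟨Fin.last j, by
            rw [hB'l, hNB, SH9_single_edges]; exact Finset.mem_singleton_self X⟩
        · exact ⟨i.castSucc, by rw [hB'c]; exact hi⟩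
    have hEnot : E ∉ famEdges B := by
      intro h
      obtain ⟨i, hi⟩ := SH9_mem_famEdges.mp h
      exact hEF _ (SH9_flower_mem (B i) hi)
        (SH9_mem_famFlowers.mpr ⟨i, Finset.mem_image_of_mem _ hi⟩)
    have hcard : (famEdges B').card = (famEdges B).card + 1 := by
      rw [hfe, Finset.card_insert_of_notMem hEnot]
    have hle : (famEdges B').card ≤ H.dPrime :=
      le_csSup hbdd ⟨j+1, B', hssd, rfl⟩
    have hfl := SH9_card_flowers_le hB
    omega
  -- minimality
  have hmin : ∀ D ⊂ famFlowers B, ¬ H.IsCover D := by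
    intro D hD hDc
    obtain ⟨f, hfF, hfD⟩ := Finset.exists_of_ssubset hD
    obtain ⟨p, hp⟩ := SH9_mem_famFlowers.mp hfF
    obtain ⟨E, hE, rfl⟩ := Finset.mem_image.mp hp
    obtain ⟨w, hwE, hwD⟩ := hDc E ((B p).subset hE)
    have hwF : w ∈ famFlowers B := hD.subset hwD
    have hw := SH9_edge_inter hB hE hwE hwF
    exact hfD (hw ▸ hwD)
  have hmc : H.IsMinCover (famFlowers B) := ⟨hcover, hmin⟩
  refine ⟨hmc, ?_⟩
  have hmem : (famFlowers B).card ∈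
      {n : ℕ | ∃ C : Finset α, H.IsMinCover C ∧ n = C.card} := ⟨famFlowers B, hmc, rfl⟩
  have hub : ∀ n ∈ {n : ℕ | ∃ C : Finset α, H.IsMinCover C ∧ n = C.card},
      n ≤ (famFlowers B).card := by
    rintro n ⟨C, hC, rfl⟩
    have hEx : ∀ v ∈ C, ∃ E ∈ H.edges, v ∈ E ∧ ∀ w ∈ E, w ∈ C → w = v := by
      intro v hvC
      have hne : ¬ H.IsCover (C.erase v) := hC.2 _ (Finset.erase_ssubset hvC)
      rw [IsCover] at hne
      push_neg at hne
      obtain ⟨E, hEH, hE⟩ := hne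
      obtain ⟨w, hwE, hwC⟩ := hC.1 E hEH
      have hwv : w = v := by
        by_contra h; exact hE w hwE (Finset.mem_erase.mpr ⟨h, hwC⟩)
      refine ⟨E, hEH, hwv ▸ hwE, fun u huE huC => ?_⟩
      by_contra h; exact hE u huE (Finset.mem_erase.mpr ⟨h, huC⟩)
    let e := C.equivFin.symm
    let vv : Fin C.card → α := fun i => (e i : α)
    have hvvC : ∀ i, vv i ∈ C := fun i => (e i).2
    have hvvinj : Function.Injective vv := fun a b h => e.injective (Subtype.ext h)
    choose EE hEEH hEEv hEEC using fun i => hEx (vv i) (hvvC i)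
    set B2 : Fin C.card → H.BouquetOf :=
      fun i => SH9_single H (EE i) (vv i) (hEEH i) (hEEv i) with hB2
    have hfl2 : ∀ i, (B2 i).flowers = {vv i} := fun i => SH9_single_flowers ..
    have hed2 : ∀ i, (B2 i).edges = {EE i} := fun i => rfl
    have hssd2 : H.SSD B2 := by
      constructor
      · intro p q hpq Ep hEp f hf
        rw [hed2, Finset.mem_singleton] at hEp
        rw [hfl2, Finset.mem_singleton] at hf
        subst hEp; subst hf
        intro hmem
        exact hpq (hvvinj (hEEC p (vv q) hmem (hvvC q))).symm
      · intro G hG hGsub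
        obtain ⟨w, hwG, hwC⟩ := hC.1 G hG
        have hwF : w ∈ famFlowers B2 := by
          refine SH9_mem_famFlowers.mpr ⟨e.symm ⟨w, hwC⟩, ?_⟩
          rw [hfl2, Finset.mem_singleton]
          show w = ((e (e.symm ⟨w, hwC⟩)) : α)
          rw [Equiv.apply_symm_apply]
        exact (Finset.mem_sdiff.mp (hGsub hwG)).2 hwF
    have hEEinj : Function.Injective EE := by
      intro a b h
      exact hvvinj (hEEC b (vv a) (h ▸ hEEv a) (hvvC a))
    have hfe2 : famEdges B2 = Finset.univ.image EE := by
      ext X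
      rw [SH9_mem_famEdges]
      simp only [Finset.mem_image, Finset.mem_univ, true_and]
      constructor
      · rintro ⟨i, hi⟩
        rw [hed2, Finset.mem_singleton] at hi
        exact ⟨i, hi.symm⟩
      · rintro ⟨i, rfl⟩
        exact ⟨i, Finset.mem_singleton_self _⟩
    have hcard2 : (famEdges B2).card = C.card := by
      rw [hfe2, Finset.card_image_of_injective _ hEEinj, Finset.card_univ,
        Fintype.card_fin]
    rw [hmax]
    exact le_csSup hbdd ⟨C.card, B2, hssd2, hcard2.symm⟩
  exact le_antisymm (le_csSup ⟨_, hub⟩ hmem) (csSup_le ⟨_, hmem⟩ hub)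
end

section
/- A single bouquet B of a simple hypergraph H, namely a partial hypergraph whose edges have nonempty common intersection equipped with flowers ℓ_i ∈ E_j iff i = j, forms (as a singleton set {B}) a semi-strongly disjoint set of bouquets of H whenever V(B) \ F(B) is independent in H; in this case its flower set extends to a minimal vertex cover of H of size at least the number of edges of B, hence α₀'(H) ≥ |E(B)|. -/
open Finset

open SimpleHypergraph in
/-- a single bouquet `B` of `H` with `V(B) \ F(B)` independent in
`H` forms a semi-strongly disjoint singleton set of bouquets; its flower set
extends to a minimal vertex cover of size at least `|E(B)|`, so
`α₀'(H) ≥ |E(B)|`. -/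
theorem stmt12 {α : Type*} [DecidableEq α] (H : SimpleHypergraph α)
    (B : H.BouquetOf) (hind : H.Indep (B.verts \ B.flowers)) :
    H.SSD (fun _ : Fin 1 => B) ∧
    (∃ C : Finset α, H.IsMinCover C ∧ B.flowers ⊆ C ∧ B.edges.card ≤ C.card) ∧
    B.edges.card ≤ H.alpha0' := by

  classical
  -- basic facts
  have hBverts : B.verts ⊆ H.verts := by
    intro v hv
    simp only [BouquetOf.verts, Finset.mem_sup, id] at hv
    obtain ⟨E, hE, hvE⟩ := hv
    exact Finset.mem_sup.mpr ⟨E, B.subset hE, hvE⟩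
  have hflsub : B.flowers ⊆ B.verts := by
    intro f hf
    simp only [BouquetOf.flowers, Finset.mem_image] at hf
    obtain ⟨E, hE, rfl⟩ := hf
    exact Finset.mem_sup.mpr ⟨E, hE, (B.flower_spec E hE E hE).mpr rfl⟩
  set C₀ : Finset α := H.verts \ (B.verts \ B.flowers) with hC₀
  have hC₀cov : H.IsCover C₀ := by
    intro E hE
    by_contra h
    push_neg at h
    apply hind E hE
    intro v hv
    have hvV : v ∈ H.verts := Finset.mem_sup.mpr ⟨E, hE, hv⟩
    have := h v hv
    rw [hC₀, Finset.mem_sdiff] at this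
    push_neg at this
    exact this hvV
  have hflC₀ : B.flowers ⊆ C₀ := by
    intro f hf
    rw [hC₀, Finset.mem_sdiff]
    refine ⟨hBverts (hflsub hf), ?_⟩
    simp [hf]
  -- any cover inside C₀ contains all flowers
  have key : ∀ D ⊆ C₀, H.IsCover D → B.flowers ⊆ D := by
    intro D hD hcov f hf
    simp only [BouquetOf.flowers, Finset.mem_image] at hf
    obtain ⟨E, hE, rfl⟩ := hf
    obtain ⟨v, hvE, hvD⟩ := hcov E (B.subset hE)
    have hvC₀ := hD hvD
    rw [hC₀, Finset.mem_sdiff] at hvC₀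
    have hvBv : v ∈ B.verts := Finset.mem_sup.mpr ⟨E, hE, hvE⟩
    have hvfl : v ∈ B.flowers := by
      by_contra h
      exact hvC₀.2 (Finset.mem_sdiff.mpr ⟨hvBv, h⟩)
    simp only [BouquetOf.flowers, Finset.mem_image] at hvfl
    obtain ⟨F, hF, rfl⟩ := hvfl
    have : F = E := (B.flower_spec F hF E hE).mp hvE
    subst this
    exact hvD
  -- pick minimal-cardinality cover inside C₀
  obtain ⟨C, hCmem, hCmin⟩ := Finset.exists_min_image
    (C₀.powerset.filter H.IsCover) Finset.card
    ⟨C₀, by simp [hC₀cov]⟩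
  simp only [Finset.mem_filter, Finset.mem_powerset] at hCmem
  obtain ⟨hCsub, hCcov⟩ := hCmem
  have hCminCover : H.IsMinCover C := by
    refine ⟨hCcov, ?_⟩
    intro D hD hDcov
    have hDle := hCmin D (by
      simp only [Finset.mem_filter, Finset.mem_powerset]
      exact ⟨hD.subset.trans hCsub, hDcov⟩)
    exact absurd hDle (not_le.mpr (Finset.card_lt_card hD))
  have hflC : B.flowers ⊆ C := key C hCsub hCcov
  have hcardfl : B.flowers.card = B.edges.card := by
    apply Finset.card_image_of_injOn
    intro E hE F hF hEF
    have : B.flower E ∈ F := hEF ▸ (B.flower_spec F hF F hF).mpr rfl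
    exact (B.flower_spec E hE F hF).mp this
  have hcardC : B.edges.card ≤ C.card := by
    rw [← hcardfl]; exact Finset.card_le_card hflC
  -- SSD
  have hssd : H.SSD (fun _ : Fin 1 => B) := by
    constructor
    · intro p q hpq
      exact absurd (Subsingleton.elim p q) hpq
    · have h1 : famVerts (fun _ : Fin 1 => B) = B.verts := by
        simp [famVerts]
      have h2 : famFlowers (fun _ : Fin 1 => B) = B.flowers := by
        simp [famFlowers]
      rw [h1, h2]; exact hind
  refine ⟨hssd, ⟨C, hCminCover, hflC, hcardC⟩, ?_⟩
  -- alpha0'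
  have hbdd : BddAbove {n : ℕ | ∃ C : Finset α, H.IsMinCover C ∧ n = C.card} := by
    refine ⟨H.verts.card, ?_⟩
    rintro n ⟨D, ⟨hDcov, hDmin⟩, rfl⟩
    apply Finset.card_le_card
    intro v hv
    by_contra hvV
    refine hDmin (D.erase v) (Finset.erase_ssubset hv) ?_
    intro E hE
    obtain ⟨w, hwE, hwD⟩ := hDcov E hE
    refine ⟨w, hwE, Finset.mem_erase.mpr ⟨?_, hwD⟩⟩
    rintro rfl
    exact hvV (Finset.mem_sup.mpr ⟨E, hE, hwE⟩)
  calc B.edges.card ≤ C.card := hcardC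
    _ ≤ H.alpha0' := le_csSup hbdd ⟨C, hCminCover, rfl⟩
end
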